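/- arXiv:1507.04778 — 2 statements merged into one kernel-verified Lean document; each statement's English description precedes it below -/
import Mathlib

section
/- Let G_F be a simple (undirected) graph on n vertices with Laplacian matrix L_F ∈ ℝ^{n×n}, and let Λ = diag(a_{10},…,a_{n0}) with each a_{i0} ∈ {0,1}. If every vertex i is connected in G_F (by a path, possibly of length zero) to some vertex j with a_{j0} = 1 — equivalently, if in the augmented directed graph obtained by adding a leader node 0 with an edge from 0 to each i having a_{i0} = 1, the leader has directed paths to all n vertices — then the leader-follower topology matrix H = L_F + Λ is symmetric positive definite. -/
open Matrix

/-- If, in the proximity graph `G` on `n` follower vertices,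
every vertex is connected (by a path, possibly trivial) to some vertex that is
adjacent to the leader (`a j = 1`), then the leader-follower topology matrix
`H = L_F + Λ` is symmetric positive definite. -/
theorem leaderFollowerMatrix_posDef
    (n : ℕ) (G : SimpleGraph (Fin n)) [DecidableRel G.Adj]
    (a : Fin n → ℝ) (ha : ∀ i, a i = 0 ∨ a i = 1)
    (hcon : ∀ i : Fin n, ∃ j : Fin n, G.Reachable i j ∧ a j = 1) :
    (G.lapMatrix ℝ + Matrix.diagonal a).PosDef := by
  have hL : (G.lapMatrix ℝ).PosSemidef := SimpleGraph.posSemidef_lapMatrix ℝ G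
  have haa : ∀ i, 0 ≤ a i := fun i => by rcases ha i with h | h <;> rw [h] <;> norm_num
  have hD : (Matrix.diagonal a).PosSemidef := PosSemidef.diagonal haa
  refine posDef_iff_dotProduct_mulVec.mpr ⟨hL.1.add hD.1, fun x hx => ?_⟩
  have h1 : 0 ≤ star x ⬝ᵥ G.lapMatrix ℝ *ᵥ x := hL.dotProduct_mulVec_nonneg x
  have h2 : 0 ≤ star x ⬝ᵥ Matrix.diagonal a *ᵥ x := hD.dotProduct_mulVec_nonneg x
  rw [add_mulVec, dotProduct_add]
  rcases lt_or_eq_of_le h1 with h | h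
  · exact lt_add_of_lt_of_nonneg h h2
  rcases lt_or_eq_of_le h2 with h' | h'
  · exact lt_add_of_nonneg_of_lt h1 h'
  exfalso
  -- from h : xᵀ L x = 0, x is constant on components
  have hconst : ∀ i j : Fin n, G.Reachable i j → x i = x j := by
    rw [← SimpleGraph.lapMatrix_toLinearMap₂'_apply'_eq_zero_iff_forall_reachable]
    rw [Matrix.toLinearMap₂'_apply']
    simpa using h.symm
  -- from h' : Σ a i * x i ^ 2 = 0, each term zero
  have hterm : ∀ i, a i * x i * x i = 0 := by
    intro i
    have hsum : ∑ i, x i * (a i * x i) = 0 := by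
      have := h'.symm
      simpa [dotProduct, mulVec_diagonal] using this
    have hnn : ∀ i ∈ Finset.univ, 0 ≤ x i * (a i * x i) := by
      intro i _
      have : x i * (a i * x i) = a i * (x i * x i) := by ring
      rw [this]
      exact mul_nonneg (haa i) (mul_self_nonneg _)
    have := (Finset.sum_eq_zero_iff_of_nonneg hnn).mp hsum i (Finset.mem_univ i)
    linarith [this]
  apply hx
  funext i
  obtain ⟨j, hreach, hj⟩ := hcon i
  have hxj : x j = 0 := by
    have := hterm j
    rw [hj, one_mul] at this
    exact mul_self_eq_zero.mp this
  simpa [hxj] using hconst i j hreach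
end

section
/- Let q_i : ℝ → ℝ^p be differentiable for i = 0, 1, …, n, and for i ∈ {1,…,n}, j ∈ {0,1,…,n} let W_ij : ℝ^p → ℝ be differentiable functions satisfying W_ij(z) = W_ji(−z) for all z ∈ ℝ^p and all i, j ∈ {1,…,n}. Define V_2(t) = ½ Σ_{i=1}^n Σ_{j=1}^n W_ij(q_i(t) − q_j(t)) + Σ_{i=1}^n W_{i0}(q_i(t) − q_0(t)). Then V_2 is differentiable and V_2'(t) = Σ_{i=1}^n Σ_{j=0}^n ⟨ q̇_i(t) − q̇_0(t), ∇W_ij(q_i(t) − q_j(t)) ⟩ for all t, where ∇W_ij is the gradient of W_ij and ⟨·,·⟩ is the Euclidean inner product. -/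
open scoped RealInnerProductSpace

section aux

variable {E : Type*} [NormedAddCommGroup E] [InnerProductSpace ℝ E] [CompleteSpace E]

lemma comp_hasDerivAt_inner (f : E → ℝ) (hf : Differentiable ℝ f)
    (c : ℝ → E) (c' : E) {t : ℝ} (hc : HasDerivAt c c' t) :
    HasDerivAt (fun τ => f (c τ)) ⟪c', gradient f (c t)⟫ t := by
  have h := ((hf (c t)).hasGradientAt).hasFDerivAt.comp_hasDerivAt t hc
  simpa [InnerProductSpace.toDual_apply_apply, real_inner_comm, Function.comp_def] using h

lemma gradient_neg_comp (f : E → ℝ) (hf : Differentiable ℝ f) (z : E) :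
    gradient (fun x => f (-x)) z = - gradient f (-z) := by
  have hg : HasGradientAt f (gradient f (-z)) (-z) := (hf (-z)).hasGradientAt
  have hfd : HasFDerivAt (fun x => f (-x))
      ((InnerProductSpace.toDual ℝ E (gradient f (-z))).comp
        (-(ContinuousLinearMap.id ℝ E))) z := by
    exact hg.hasFDerivAt.comp z (by exact (hasFDerivAt_id z).neg)
  have : (InnerProductSpace.toDual ℝ E (gradient f (-z))).comp
      (-(ContinuousLinearMap.id ℝ E))
      = InnerProductSpace.toDual ℝ E (-(gradient f (-z))) := by
    ext v
    simp [InnerProductSpace.toDual_apply_apply, inner_neg_left, inner_neg_right]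
  rw [this] at hfd
  exact (hasGradientAt_iff_hasFDerivAt.2 hfd).gradient

end aux

/-- Let `q_i : ℝ → ℝᵖ` (`i = 0,…,n`, with `q₀` the leader) be
differentiable and let the pairwise potentials `W_ij : ℝᵖ → ℝ` (as functions of the
relative position) be differentiable with `W_ij(z) = W_ji(−z)` for follower pairs.
Then the total potential
`V₂(t) = ½ Σᵢ Σⱼ W_ij(q_i − q_j) + Σᵢ W_i0(q_i − q₀)` is differentiable with
`V₂'(t) = Σᵢ Σ_{j=0}^n ⟨ q̇_i − q̇₀, ∇W_ij(q_i − q_j) ⟩`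
(`⟪·, ·⟫` denotes the real inner product, `gradient` the gradient). -/
theorem deriv_total_potential
    (p n : ℕ)
    (q dq : Fin n → ℝ → EuclideanSpace ℝ (Fin p))
    (q0 dq0 : ℝ → EuclideanSpace ℝ (Fin p))
    (hq : ∀ i t, HasDerivAt (q i) (dq i t) t)
    (hq0 : ∀ t, HasDerivAt q0 (dq0 t) t)
    (W : Fin n → Fin n → EuclideanSpace ℝ (Fin p) → ℝ)
    (W0 : Fin n → EuclideanSpace ℝ (Fin p) → ℝ)
    (hW : ∀ i j, Differentiable ℝ (W i j))
    (hW0 : ∀ i, Differentiable ℝ (W0 i))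
    (hWsymm : ∀ i j z, W i j z = W j i (-z)) :
    ∀ t, HasDerivAt
      (fun τ => (1/2) * (∑ i, ∑ j, W i j (q i τ - q j τ)) + ∑ i, W0 i (q i τ - q0 τ))
      (∑ i, ((∑ j, ⟪dq i t - dq0 t, gradient (W i j) (q i t - q j t)⟫)
          + ⟪dq i t - dq0 t, gradient (W0 i) (q i t - q0 t)⟫)) t := by
  intro t
  set G : Fin n → Fin n → EuclideanSpace ℝ (Fin p) :=
    fun i j => gradient (W i j) (q i t - q j t) with hG
  -- gradient antisymmetry
  have hGsymm : ∀ i j, G j i = - G i j := by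
    intro i j
    have h1 : W j i = fun z => W i j (-z) := by
      funext z; rw [hWsymm j i z]
    have := gradient_neg_comp (W i j) (hW i j) (q j t - q i t)
    rw [hG]
    simp only []
    rw [h1, this, neg_sub]
  have h1 : HasDerivAt (fun τ => ∑ i, ∑ j, W i j (q i τ - q j τ))
      (∑ i, ∑ j, ⟪dq i t - dq j t, G i j⟫) t := by
    apply HasDerivAt.fun_sum; intro i _
    apply HasDerivAt.fun_sum; intro j _
    exact comp_hasDerivAt_inner (W i j) (hW i j) _ _ ((hq i t).sub (hq j t))
  have h2 : HasDerivAt (fun τ => ∑ i, W0 i (q i τ - q0 τ))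
      (∑ i, ⟪dq i t - dq0 t, gradient (W0 i) (q i t - q0 t)⟫) t := by
    apply HasDerivAt.fun_sum; intro i _
    exact comp_hasDerivAt_inner (W0 i) (hW0 i) _ _ ((hq i t).sub (hq0 t))
  have hmain := (h1.const_mul (1/2 : ℝ)).add h2
  have hkey : (1/2 : ℝ) * (∑ i, ∑ j, ⟪dq i t - dq j t, G i j⟫)
      = ∑ i, ∑ j, ⟪dq i t - dq0 t, G i j⟫ := by
    have hsplit : ∀ i j : Fin n, ⟪dq i t - dq j t, G i j⟫
        = ⟪dq i t - dq0 t, G i j⟫ - ⟪dq j t - dq0 t, G i j⟫ := by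
      intro i j
      rw [← inner_sub_left, sub_sub_sub_cancel_right]
    have hB : (∑ i, ∑ j, ⟪dq j t - dq0 t, G i j⟫)
        = - ∑ i, ∑ j, ⟪dq i t - dq0 t, G i j⟫ := by
      rw [Finset.sum_comm]
      rw [← Finset.sum_neg_distrib]
      apply Finset.sum_congr rfl; intro j _
      rw [← Finset.sum_neg_distrib]
      apply Finset.sum_congr rfl; intro i _
      rw [hGsymm i j, inner_neg_right, neg_neg]
    simp only [hsplit, Finset.sum_sub_distrib, hB]
    ring
  have hfinal : (1/2 : ℝ) * (∑ i, ∑ j, ⟪dq i t - dq j t, G i j⟫)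
      + ∑ i, ⟪dq i t - dq0 t, gradient (W0 i) (q i t - q0 t)⟫
      = ∑ i, ((∑ j, ⟪dq i t - dq0 t, gradient (W i j) (q i t - q j t)⟫)
          + ⟪dq i t - dq0 t, gradient (W0 i) (q i t - q0 t)⟫) := by
    rw [hkey, Finset.sum_add_distrib]
  exact hfinal ▸ hmain
end
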